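/- Let X be a nonempty finite state space, U a nonempty finite action space, γ ∈ [0,1), and π a policy. Let r : X × U → ℝ be a reward function with values in [0,1], and let p^S and p^T be two transition kernels on X × U with p^T(x′|x,u) > 0 for all x, u, x′. Let V_{p^S}^π and V_{p^T}^π be the value functions of π under kernels p^S and p^T (same reward r, Q-functions satisfying their Bellman equations). Let d be a probability mass function on X, and suppose ε ≥ 0 satisfies √( (1/2) D_KL(p^S(·|x,u) ‖ p^T(·|x,u)) ) ≤ ε for every (x,u) ∈ X × U. Then Σ_{s∈X} d(s) V_{p^T}^π(s) ≥ Σ_{s∈X} d(s) V_{p^S}^π(s) − γε/(1−γ)². (Theorem 1.) -/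

import Mathlib

open Finset



lemma aux_log_ge (t : ℝ) (ht : 0 < t) : 0 ≤ Real.log t + 1/t - 1 := by
  have h := Real.log_le_sub_one_of_pos (show (0:ℝ) < 1/t by positivity)
  rw [one_div, Real.log_inv] at h
  rw [one_div]
  linarith

noncomputable def Gfun : ℝ → ℝ := fun t => (t + 1) * Real.log t - 2 * (t - 1)

noncomputable def Ffun : ℝ → ℝ :=
  fun t => (t + 2) * (t * Real.log t - t + 1) - (3/2) * (t - 1)^2

lemma hasDerivAt_G {t : ℝ} (ht : 0 < t) :
    HasDerivAt Gfun (Real.log t + 1/t - 1) t := by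
  have h1 : HasDerivAt (fun t : ℝ => (t + 1) * Real.log t)
      (1 * Real.log t + (t + 1) * t⁻¹) t :=
    ((hasDerivAt_id t).add_const 1).mul (Real.hasDerivAt_log ht.ne')
  have h2 : HasDerivAt (fun t : ℝ => 2 * (t - 1)) (2 * 1) t :=
    ((hasDerivAt_id t).sub_const 1).const_mul 2
  have h3 := h1.sub h2
  refine h3.congr_deriv ?_
  linear_combination (mul_inv_cancel₀ ht.ne')

lemma hasDerivAt_F {t : ℝ} (ht : 0 < t) : HasDerivAt Ffun (2 * Gfun t) t := by
  have hlog := Real.hasDerivAt_log ht.ne'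
  have h1 : HasDerivAt (fun t : ℝ => t * Real.log t) (1 * Real.log t + t * t⁻¹) t :=
    (hasDerivAt_id t).mul hlog
  have h2 : HasDerivAt (fun t : ℝ => t * Real.log t - t + 1)
      (1 * Real.log t + t * t⁻¹ - 1) t := (h1.sub (hasDerivAt_id t)).add_const 1
  have h3 : HasDerivAt (fun t : ℝ => (t + 2) * (t * Real.log t - t + 1))
      (1 * (t * Real.log t - t + 1) + (t + 2) * (1 * Real.log t + t * t⁻¹ - 1)) t :=
    ((hasDerivAt_id t).add_const 2).mul h2
  have h4 : HasDerivAt (fun t : ℝ => (3/2) * (t - 1)^2)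
      ((3/2) * ((2 : ℕ) * (t - 1)^1 * 1)) t :=
    (((hasDerivAt_id t).sub_const 1).pow 2).const_mul (3/2)
  have h5 := h3.sub h4
  refine h5.congr_deriv ?_
  have : t * t⁻¹ = 1 := mul_inv_cancel₀ ht.ne'
  simp only [Gfun]
  push_cast
  nlinarith [this]

lemma G_mono : MonotoneOn Gfun (Set.Ioi (0:ℝ)) := by
  apply monotoneOn_of_deriv_nonneg (convex_Ioi 0)
  · exact fun t ht => (hasDerivAt_G ht).continuousAt.continuousWithinAt
  · intro t ht
    rw [interior_Ioi] at ht
    exact (hasDerivAt_G ht).differentiableAt.differentiableWithinAt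
  · intro t ht
    rw [interior_Ioi] at ht
    rw [(hasDerivAt_G ht).deriv]
    exact aux_log_ge t ht

lemma Gfun_one : Gfun 1 = 0 := by simp [Gfun]

lemma Ffun_one : Ffun 1 = 0 := by simp [Ffun]

lemma F_nonneg {t : ℝ} (ht : 0 < t) : 0 ≤ Ffun t := by
  rcases le_total t 1 with h | h
  · have anti : AntitoneOn Ffun (Set.Ioc 0 1) := by
      apply antitoneOn_of_deriv_nonpos (convex_Ioc 0 1)
      · exact fun s hs => (hasDerivAt_F hs.1).continuousAt.continuousWithinAt
      · intro s hs
        rw [interior_Ioc] at hs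
        exact (hasDerivAt_F hs.1).differentiableAt.differentiableWithinAt
      · intro s hs
        rw [interior_Ioc] at hs
        rw [(hasDerivAt_F hs.1).deriv]
        have hg : Gfun s ≤ Gfun 1 := G_mono hs.1 (by norm_num) hs.2.le
        rw [Gfun_one] at hg
        linarith
    have := anti ⟨ht, h⟩ ⟨one_pos, le_refl 1⟩ h
    rw [Ffun_one] at this
    exact this
  · have mono : MonotoneOn Ffun (Set.Ici 1) := by
      apply monotoneOn_of_deriv_nonneg (convex_Ici 1)
      · exact fun s hs => (hasDerivAt_F (lt_of_lt_of_le one_pos hs)).continuousAt.continuousWithinAt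
      · intro s hs
        rw [interior_Ici] at hs
        exact (hasDerivAt_F (lt_trans one_pos hs)).differentiableAt.differentiableWithinAt
      · intro s hs
        rw [interior_Ici] at hs
        rw [(hasDerivAt_F (lt_trans one_pos hs)).deriv]
        have hg : Gfun 1 ≤ Gfun s := G_mono (by norm_num) (Set.mem_Ioi.2 (lt_trans one_pos hs)) hs.le
        rw [Gfun_one] at hg
        linarith
    have := mono (Set.mem_Ici.2 (le_refl 1)) (Set.mem_Ici.2 h) h
    rw [Ffun_one] at this
    exact this

lemma kl_pointwise {a b : ℝ} (ha : 0 ≤ a) (hb : 0 < b) :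
    (3/2) * (a - b)^2 / (a + 2*b) ≤ a * Real.log (a / b) - a + b := by
  rcases eq_or_lt_of_le ha with h0 | ha'
  · rw [← h0]
    rw [div_le_iff₀ (by positivity)]
    nlinarith
  · have ht : 0 < a / b := div_pos ha' hb
    have hF := F_nonneg ht
    have key : b^2 * Ffun (a/b) =
        (a + 2*b) * (a * Real.log (a/b) - a + b) - (3/2) * (a - b)^2 := by
      simp only [Ffun]
      field_simp
    rw [div_le_iff₀ (by positivity)]
    nlinarith [key, hF, sq_nonneg b]



lemma pinsker {ι : Type*} [Fintype ι] (p q : ι → ℝ) (hp : ∀ i, 0 ≤ p i)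
    (hq : ∀ i, 0 < q i) (hps : ∑ i, p i = 1) (hqs : ∑ i, q i = 1) :
    (∑ i, |p i - q i|)^2 ≤ 2 * ∑ i, p i * Real.log (p i / q i) := by
  have hKLsum : ∑ i, (p i * Real.log (p i / q i) - p i + q i)
      = ∑ i, p i * Real.log (p i / q i) := by
    simp [Finset.sum_add_distrib, Finset.sum_sub_distrib, hps, hqs]
  have hw : ∑ i, (p i + 2 * q i) = 3 := by
    rw [Finset.sum_add_distrib, ← Finset.mul_sum, hps, hqs]; norm_num
  have hsed := Finset.sq_sum_div_le_sum_sq_div Finset.univ (fun i => |p i - q i|)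
      (g := fun i => p i + 2 * q i) (fun i _ => by nlinarith [hp i, hq i])
  rw [hw] at hsed
  have h1 : ∑ i, |p i - q i|^2 / (p i + 2 * q i)
      ≤ (2/3) * ∑ i, (p i * Real.log (p i / q i) - p i + q i) := by
    rw [Finset.mul_sum]
    apply Finset.sum_le_sum
    intro i _
    rw [sq_abs]
    have h := kl_pointwise (hp i) (hq i)
    have e : (3/2) * (p i - q i)^2 / (p i + 2*q i)
        = (3/2) * ((p i - q i)^2 / (p i + 2*q i)) := mul_div_assoc _ _ _
    linarith
  rw [hKLsum] at h1
  have h2 : (∑ i, |p i - q i|)^2 / 3 ≤ (2/3) * ∑ i, p i * Real.log (p i / q i) :=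
    le_trans hsed h1
  linarith

lemma tv_le {ι : Type*} [Fintype ι] (p q : ι → ℝ) (hp : ∀ i, 0 ≤ p i)
    (hq : ∀ i, 0 < q i) (hps : ∑ i, p i = 1) (hqs : ∑ i, q i = 1)
    (ε : ℝ) (hε : 0 ≤ ε)
    (h : Real.sqrt ((1/2) * ∑ i, p i * Real.log (p i / q i)) ≤ ε) :
    ∑ i, |p i - q i| ≤ 2 * ε := by
  have hpk := pinsker p q hp hq hps hqs
  have hA : 0 ≤ ∑ i, |p i - q i| := Finset.sum_nonneg fun i _ => abs_nonneg _
  rcases le_or_gt ((1/2) * ∑ i, p i * Real.log (p i / q i)) 0 with hKL | hKL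
  · nlinarith
  · have hsq := Real.sq_sqrt hKL.le
    have h2 : (1/2) * ∑ i, p i * Real.log (p i / q i) ≤ ε^2 := by
      nlinarith [Real.sqrt_nonneg ((1/2) * ∑ i, p i * Real.log (p i / q i))]
    nlinarith


lemma Q_bounds {X U : Type*} [Fintype X] [Fintype U] [Nonempty X] [Nonempty U]
    (γ : ℝ) (hγ0 : 0 ≤ γ) (hγ1 : γ < 1)
    (π : X → U → ℝ) (hπ_nonneg : ∀ x u, 0 ≤ π x u) (hπ_sum : ∀ x, ∑ u, π x u = 1)
    (r : X → U → ℝ) (hr0 : ∀ x u, 0 ≤ r x u) (hr1 : ∀ x u, r x u ≤ 1)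
    (p : X → U → X → ℝ) (hp_nonneg : ∀ x u x', 0 ≤ p x u x')
    (hp_sum : ∀ x u, ∑ x', p x u x' = 1)
    (Q : X → U → ℝ)
    (hQ : ∀ x u, Q x u = r x u + γ * ∑ x', p x u x' * ∑ u', π x' u' * Q x' u') :
    ∀ x u, 0 ≤ Q x u ∧ Q x u ≤ 1 / (1 - γ) := by
  have h1γ : 0 < 1 - γ := by linarith
  obtain ⟨⟨x0, u0⟩, _, hmax⟩ := Finset.exists_max_image Finset.univ
    (fun s : X × U => Q s.1 s.2) Finset.univ_nonempty
  obtain ⟨⟨x1, u1⟩, _, hmin⟩ := Finset.exists_min_image Finset.univ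
    (fun s : X × U => Q s.1 s.2) Finset.univ_nonempty
  have hmax' : ∀ x u, Q x u ≤ Q x0 u0 := fun x u => hmax (x, u) (Finset.mem_univ _)
  have hmin' : ∀ x u, Q x1 u1 ≤ Q x u := fun x u => hmin (x, u) (Finset.mem_univ _)
  have hVle : ∀ x, ∑ u', π x u' * Q x u' ≤ Q x0 u0 := by
    intro x
    calc ∑ u', π x u' * Q x u' ≤ ∑ u', π x u' * Q x0 u0 :=
          Finset.sum_le_sum fun u _ => mul_le_mul_of_nonneg_left (hmax' x u) (hπ_nonneg x u)
      _ = Q x0 u0 := by rw [← Finset.sum_mul, hπ_sum, one_mul]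
  have hVge : ∀ x, Q x1 u1 ≤ ∑ u', π x u' * Q x u' := by
    intro x
    calc Q x1 u1 = ∑ u', π x u' * Q x1 u1 := by rw [← Finset.sum_mul, hπ_sum, one_mul]
      _ ≤ ∑ u', π x u' * Q x u' :=
          Finset.sum_le_sum fun u _ => mul_le_mul_of_nonneg_left (hmin' x u) (hπ_nonneg x u)
  have hMub : Q x0 u0 ≤ 1 + γ * Q x0 u0 := by
    have h1 : ∑ x', p x0 u0 x' * ∑ u', π x' u' * Q x' u' ≤ Q x0 u0 := by
      calc ∑ x', p x0 u0 x' * ∑ u', π x' u' * Q x' u'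
          ≤ ∑ x', p x0 u0 x' * Q x0 u0 :=
            Finset.sum_le_sum fun x' _ =>
              mul_le_mul_of_nonneg_left (hVle x') (hp_nonneg x0 u0 x')
        _ = Q x0 u0 := by rw [← Finset.sum_mul, hp_sum, one_mul]
    have h2 := mul_le_mul_of_nonneg_left h1 hγ0
    have h3 := hQ x0 u0
    have h4 := hr1 x0 u0
    linarith
  have hmlb : γ * Q x1 u1 ≤ Q x1 u1 := by
    have h1 : Q x1 u1 ≤ ∑ x', p x1 u1 x' * ∑ u', π x' u' * Q x' u' := by
      calc Q x1 u1 = ∑ x', p x1 u1 x' * Q x1 u1 := by rw [← Finset.sum_mul, hp_sum, one_mul]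
        _ ≤ ∑ x', p x1 u1 x' * ∑ u', π x' u' * Q x' u' :=
            Finset.sum_le_sum fun x' _ =>
              mul_le_mul_of_nonneg_left (hVge x') (hp_nonneg x1 u1 x')
    have h2 := mul_le_mul_of_nonneg_left h1 hγ0
    have h3 := hQ x1 u1
    have h4 := hr0 x1 u1
    linarith
  have hM : Q x0 u0 ≤ 1 / (1 - γ) := by
    rw [le_div_iff₀ h1γ]
    nlinarith
  have hm : 0 ≤ Q x1 u1 := by nlinarith
  exact fun x u => ⟨le_trans hm (hmin' x u), le_trans (hmax' x u) hM⟩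




/-- **Theorem 1.**
If `√((1/2) D_KL(pS(·|x,u) ‖ pT(·|x,u))) ≤ ε` for every `(x,u)`, then for any
distribution `d` over states,
`Σ_s d(s) V_{pT}^π(s) ≥ Σ_s d(s) V_{pS}^π(s) − γε/(1−γ)²`. -/
theorem target_value_lower_bound
    {X U : Type*} [Fintype X] [Fintype U] [Nonempty X] [Nonempty U]
    (γ : ℝ) (hγ0 : 0 ≤ γ) (hγ1 : γ < 1)
    (π : X → U → ℝ)
    (hπ_nonneg : ∀ x u, 0 ≤ π x u) (hπ_sum : ∀ x, ∑ u, π x u = 1)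
    (r : X → U → ℝ)
    (hr0 : ∀ x u, 0 ≤ r x u) (hr1 : ∀ x u, r x u ≤ 1)
    (pS pT : X → U → X → ℝ)
    (hpS_nonneg : ∀ x u x', 0 ≤ pS x u x') (hpS_sum : ∀ x u, ∑ x', pS x u x' = 1)
    (hpT_pos : ∀ x u x', 0 < pT x u x') (hpT_sum : ∀ x u, ∑ x', pT x u x' = 1)
    (QS QT : X → U → ℝ)
    (hQS : ∀ x u, QS x u = r x u + γ * ∑ x', pS x u x' * ∑ u', π x' u' * QS x' u')
    (hQT : ∀ x u, QT x u = r x u + γ * ∑ x', pT x u x' * ∑ u', π x' u' * QT x' u')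
    (d : X → ℝ) (hd_nonneg : ∀ x, 0 ≤ d x) (hd_sum : ∑ x, d x = 1)
    (ε : ℝ) (hε : 0 ≤ ε)
    (hKL : ∀ x u,
      Real.sqrt ((1 / 2) * ∑ x', pS x u x' * Real.log (pS x u x' / pT x u x')) ≤ ε) :
    ∑ s, d s * (∑ u, π s u * QT s u) ≥
      (∑ s, d s * (∑ u, π s u * QS s u)) - γ * ε / (1 - γ) ^ 2 := by
  have h1γ : 0 < 1 - γ := by linarith
  obtain ⟨VS, hVSdef⟩ : ∃ f : X → ℝ, ∀ x, f x = ∑ u, π x u * QS x u := ⟨_, fun _ => rfl⟩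
  obtain ⟨VT, hVTdef⟩ : ∃ f : X → ℝ, ∀ x, f x = ∑ u, π x u * QT x u := ⟨_, fun _ => rfl⟩
  -- bounds on VS
  have hQSb := Q_bounds γ hγ0 hγ1 π hπ_nonneg hπ_sum r hr0 hr1 pS hpS_nonneg hpS_sum QS hQS
  have hVS0 : ∀ x, 0 ≤ VS x := by
    intro x
    rw [hVSdef]
    exact Finset.sum_nonneg fun u _ => mul_nonneg (hπ_nonneg x u) (hQSb x u).1
  have hVS1 : ∀ x, VS x ≤ 1 / (1 - γ) := by
    intro x
    rw [hVSdef]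
    calc ∑ u, π x u * QS x u ≤ ∑ u, π x u * (1 / (1 - γ)) :=
          Finset.sum_le_sum fun u _ => mul_le_mul_of_nonneg_left (hQSb x u).2 (hπ_nonneg x u)
      _ = 1 / (1 - γ) := by rw [← Finset.sum_mul, hπ_sum, one_mul]
  -- total variation bound
  have hTV : ∀ x u, ∑ x', |pS x u x' - pT x u x'| ≤ 2 * ε := fun x u =>
    tv_le (pS x u) (pT x u) (hpS_nonneg x u) (hpT_pos x u) (hpS_sum x u) (hpT_sum x u)
      ε hε (hKL x u)
  -- key estimate
  have hcc : 1 / (1 - γ) = 2 * (1 / (2 * (1 - γ))) := by field_simp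
  have key : ∀ x u, ∑ x', (pS x u x' - pT x u x') * VS x' ≤ ε / (1 - γ) := by
    intro x u
    have hc0 : 0 < 1 / (2 * (1 - γ)) := by positivity
    have hsub : ∑ x', (pS x u x' - pT x u x') * VS x'
        = ∑ x', (pS x u x' - pT x u x') * (VS x' - 1 / (2 * (1 - γ))) := by
      simp only [mul_sub, Finset.sum_sub_distrib, sub_mul, ← Finset.sum_mul,
        hpS_sum x u, hpT_sum x u]
      ring
    rw [hsub]
    calc ∑ x', (pS x u x' - pT x u x') * (VS x' - 1 / (2 * (1 - γ)))
        ≤ ∑ x', |pS x u x' - pT x u x'| * (1 / (2 * (1 - γ))) := by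
          apply Finset.sum_le_sum
          intro x' _
          have h1 : |VS x' - 1 / (2 * (1 - γ))| ≤ 1 / (2 * (1 - γ)) := by
            rw [abs_le]
            constructor
            · linarith [hVS0 x']
            · linarith [hVS1 x', hcc]
          calc (pS x u x' - pT x u x') * (VS x' - 1 / (2 * (1 - γ)))
              ≤ |(pS x u x' - pT x u x') * (VS x' - 1 / (2 * (1 - γ)))| := le_abs_self _
            _ = |pS x u x' - pT x u x'| * |VS x' - 1 / (2 * (1 - γ))| := abs_mul _ _
            _ ≤ |pS x u x' - pT x u x'| * (1 / (2 * (1 - γ))) :=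
                mul_le_mul_of_nonneg_left h1 (abs_nonneg _)
      _ = (∑ x', |pS x u x' - pT x u x'|) * (1 / (2 * (1 - γ))) := (Finset.sum_mul _ _ _).symm
      _ ≤ 2 * ε * (1 / (2 * (1 - γ))) :=
          mul_le_mul_of_nonneg_right (hTV x u) hc0.le
      _ = ε / (1 - γ) := by field_simp
  -- max of VS - VT
  obtain ⟨x0, _, hDmax⟩ := Finset.exists_max_image Finset.univ
    (fun x : X => VS x - VT x) Finset.univ_nonempty
  have hDmax' : ∀ x, VS x - VT x ≤ VS x0 - VT x0 := fun x => hDmax x (Finset.mem_univ _)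
  -- Bellman for V
  have hQS' : ∀ x u, QS x u = r x u + γ * ∑ x', pS x u x' * VS x' := by
    intro x u
    simp only [hVSdef]
    exact hQS x u
  have hQT' : ∀ x u, QT x u = r x u + γ * ∑ x', pT x u x' * VT x' := by
    intro x u
    simp only [hVTdef]
    exact hQT x u
  have hdiff : ∀ x, VS x - VT x
      = γ * ∑ u, π x u * ((∑ x', pS x u x' * VS x') - ∑ x', pT x u x' * VT x') := by
    intro x
    rw [hVSdef, hVTdef, ← Finset.sum_sub_distrib, Finset.mul_sum]
    apply Finset.sum_congr rfl
    intro u _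
    rw [hQS' x u, hQT' x u]
    ring
  have hin : ∀ x u, (∑ x', pS x u x' * VS x') - ∑ x', pT x u x' * VT x'
      ≤ ε / (1 - γ) + (VS x0 - VT x0) := by
    intro x u
    have e1 : (∑ x', pS x u x' * VS x') - ∑ x', pT x u x' * VT x'
        = (∑ x', (pS x u x' - pT x u x') * VS x')
          + ∑ x', pT x u x' * (VS x' - VT x') := by
      simp only [sub_mul, mul_sub, Finset.sum_sub_distrib, Finset.sum_add_distrib]
      ring
    have e2 : ∑ x', pT x u x' * (VS x' - VT x') ≤ VS x0 - VT x0 := by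
      calc ∑ x', pT x u x' * (VS x' - VT x')
          ≤ ∑ x', pT x u x' * (VS x0 - VT x0) :=
            Finset.sum_le_sum fun x' _ =>
              mul_le_mul_of_nonneg_left (hDmax' x') (hpT_pos x u x').le
        _ = VS x0 - VT x0 := by rw [← Finset.sum_mul, hpT_sum, one_mul]
    rw [e1]
    linarith [key x u]
  have hrec : ∀ x, VS x - VT x ≤ γ * (ε / (1 - γ) + (VS x0 - VT x0)) := by
    intro x
    rw [hdiff x]
    have h1 : ∑ u, π x u * ((∑ x', pS x u x' * VS x') - ∑ x', pT x u x' * VT x')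
        ≤ ∑ u, π x u * (ε / (1 - γ) + (VS x0 - VT x0)) :=
      Finset.sum_le_sum fun u _ => mul_le_mul_of_nonneg_left (hin x u) (hπ_nonneg x u)
    have h2 : ∑ u, π x u * (ε / (1 - γ) + (VS x0 - VT x0))
        = ε / (1 - γ) + (VS x0 - VT x0) := by rw [← Finset.sum_mul, hπ_sum, one_mul]
    rw [h2] at h1
    exact mul_le_mul_of_nonneg_left h1 hγ0
  -- solve for M
  have hMfin : VS x0 - VT x0 ≤ γ * ε / (1 - γ) ^ 2 := by
    have h1 := hrec x0
    rw [mul_add] at h1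
    have h2 : (VS x0 - VT x0) * (1 - γ) ≤ γ * (ε / (1 - γ)) := by linarith
    have h3 := mul_le_mul_of_nonneg_right h2 h1γ.le
    have e : γ * (ε / (1 - γ)) * (1 - γ) = γ * ε := by field_simp
    rw [le_div_iff₀ (by positivity : (0:ℝ) < (1 - γ) ^ 2)]
    nlinarith
  -- conclude
  have hsum : ∑ s, d s * (VS s - VT s) ≤ VS x0 - VT x0 := by
    calc ∑ s, d s * (VS s - VT s) ≤ ∑ s, d s * (VS x0 - VT x0) :=
        Finset.sum_le_sum fun s _ => mul_le_mul_of_nonneg_left (hDmax' s) (hd_nonneg s)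
      _ = VS x0 - VT x0 := by rw [← Finset.sum_mul, hd_sum, one_mul]
  have hsplit : ∑ s, d s * (VS s - VT s)
      = (∑ s, d s * VS s) - ∑ s, d s * VT s := by
    simp [mul_sub, Finset.sum_sub_distrib]
  simp only [← hVSdef, ← hVTdef, ge_iff_le]
  linarith
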